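/- Let T be a finite tree and let k be a positive integer. If the diameter of T is at least 2k, then T contains a k-leaf. -/

import Mathlib

open SimpleGraph

universe u v

namespace EternalDom

variable {V : Type u} {W : Type v}

/-- `x` is within distance `k` of `y` in `G` (in particular, a path between them exists). -/
def WithinDist (G : SimpleGraph V) (k : ℕ) (x y : V) : Prop :=
  G.Reachable x y ∧ G.dist x y ≤ k

/-- A multiset of guards is distance-`k` dominating: every vertex is within
distance `k` of some guard. -/
def IsDistKDomMultiset (G : SimpleGraph V) (k : ℕ) (D : Multiset V) : Prop :=
  ∀ w : V, ∃ x ∈ D, WithinDist G k x w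

/-- `F` is an eternal distance-`k` defence family of guard configurations of size `m`:
a nonempty family of distance-`k` dominating multisets, all of cardinality `m`, such that
for every configuration `D ∈ F` and every attacked vertex `w` there is a configuration
`D' ∈ F` containing `w` that is obtained from `D` by a matching (bijection) moving each
guard a distance of at most `k`. -/
def IsEternalFamily (G : SimpleGraph V) (k m : ℕ) (F : Set (Multiset V)) : Prop :=
  F.Nonempty ∧
    (∀ D ∈ F, Multiset.card D = m ∧ IsDistKDomMultiset G k D) ∧
    (∀ D ∈ F, ∀ w : V, ∃ D' ∈ F, w ∈ D' ∧ Multiset.Rel (WithinDist G k) D D')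

/-- The eternal distance-`k` domination number `γ^∞_{all,k}(G)`. -/
noncomputable def eternalNum (G : SimpleGraph V) (k : ℕ) : ℕ :=
  sInf {m | ∃ F : Set (Multiset V), IsEternalFamily G k m F}

/-- `x` dominates `w`: they are equal or adjacent. -/
def Dominates (G : SimpleGraph V) (x w : V) : Prop := w = x ∨ G.Adj x w

/-- A dominating set of vertices. -/
def IsDomSet (G : SimpleGraph V) (D : Set V) : Prop := ∀ w : V, ∃ x ∈ D, Dominates G x w

/-- The domination number `γ(G)`. -/
noncomputable def domNum (G : SimpleGraph V) : ℕ :=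
  sInf {n | ∃ D : Set V, IsDomSet G D ∧ D.ncard = n}

/-- A distance-`k` dominating set of vertices. -/
def IsDistKDomSet (G : SimpleGraph V) (k : ℕ) (D : Set V) : Prop :=
  ∀ w : V, ∃ x ∈ D, WithinDist G k x w

/-- The distance-`k` domination number `γ_k(G)`. -/
noncomputable def distDomNum (G : SimpleGraph V) (k : ℕ) : ℕ :=
  sInf {n | ∃ D : Set V, IsDistKDomSet G k D ∧ D.ncard = n}

/-- A leaf: a vertex of degree 1, i.e. with a unique neighbour. -/
def IsLeafV (G : SimpleGraph V) (x : V) : Prop := ∃! y, G.Adj x y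

/-- A stem: a vertex adjacent to at least one leaf. -/
def IsStem (G : SimpleGraph V) (x : V) : Prop := ∃ y, G.Adj x y ∧ IsLeafV G y

/-- `k`-leaves: a `0`-leaf is a leaf; for `k > 0`, `v` is a `k`-leaf iff `v` is adjacent to
some `(k-1)`-leaf and all but at most one of the neighbours of `v` are `t`-leaves for some
`t < k`. -/
def IsKLeaf (G : SimpleGraph V) : ℕ → V → Prop
  | 0, v => IsLeafV G v
  | (k + 1), v =>
      (∃ u, G.Adj v u ∧ IsKLeaf G k u) ∧
        ∃ w : V, ∀ x : V, G.Adj v x → x ≠ w → ∃ t, ∃ _ : t ≤ k, IsKLeaf G t x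
  termination_by k _ => k
  decreasing_by all_goals omega

/-- For a 2-leaf `v`, the set `L(v)`: the union of `L[u]` over all neighbours `u` of `v`
which are 0-leaves or 1-leaves, where for a 1-leaf `u`, `L[u]` consists of `u` and the leaves
adjacent to `u`. -/
def Lopen (G : SimpleGraph V) (v : V) : Set V :=
  {x | ∃ u, G.Adj v u ∧
    ((IsKLeaf G 0 u ∧ x = u) ∨
      (IsKLeaf G 1 u ∧ (x = u ∨ (G.Adj u x ∧ IsKLeaf G 0 x))))}

/-- For a 2-leaf `v`, the set `L[v] = L(v) ∪ {v}`. -/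
def Lclosed (G : SimpleGraph V) (v : V) : Set V := insert v (Lopen G v)

/-- A graph is eternal distance-2 domination critical if deleting any non-cut vertex
(one whose removal leaves the graph connected) strictly decreases the eternal
distance-2 domination number. -/
def EternalCritical (G : SimpleGraph V) : Prop :=
  ∀ x : V, (G.induce {y | y ≠ x}).Connected →
    eternalNum (G.induce {y | y ≠ x}) 2 < eternalNum G 2

/-- Attach a pendant path `x₁ x₂ … xₙ` on `n` new vertices to the vertex `y`,
via the edge `y x₁`. -/
def attachPath (G : SimpleGraph V) (y : V) (n : ℕ) : SimpleGraph (V ⊕ Fin n) :=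
  G.map (⟨Sum.inl, Sum.inl_injective⟩ : V ↪ V ⊕ Fin n) ⊔ (pathGraph n).map (⟨Sum.inr, Sum.inr_injective⟩ : Fin n ↪ V ⊕ Fin n) ⊔
    fromEdgeSet {e | ∃ h : 0 < n, e = s(Sum.inl y, Sum.inr ⟨0, h⟩)}

/-- The star `K_{1,m}`: centre `0`, leaves the `m` nonzero elements of `Fin (m+1)`. -/
def starGraph (m : ℕ) : SimpleGraph (Fin (m + 1)) where
  Adj x y := (x = 0 ∧ y ≠ 0) ∨ (y = 0 ∧ x ≠ 0)
  symm := by tauto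
  loopless := ⟨by rintro x (⟨h1, h2⟩ | ⟨h1, h2⟩) <;> exact h2 h1⟩

/-- Disjoint union of `G` and the star `K_{1,m}` together with one edge joining the
vertex `a` of the star to the vertex `y` of `G`. -/
def attachStar (G : SimpleGraph V) (y : V) (m : ℕ) (a : Fin (m + 1)) :
    SimpleGraph (V ⊕ Fin (m + 1)) :=
  G.map (⟨Sum.inl, Sum.inl_injective⟩ : V ↪ V ⊕ Fin (m + 1)) ⊔ (starGraph m).map (⟨Sum.inr, Sum.inr_injective⟩ : Fin (m + 1) ↪ V ⊕ Fin (m + 1)) ⊔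
    fromEdgeSet {s(Sum.inl y, Sum.inr a)}

/-- From `G` and a vertex `v`: add a new star `K_{1,m}` joined by an edge from its centre
to `v`, together with `t` new leaves adjacent to `v`. -/
def addStarAndLeaves (G : SimpleGraph V) (v : V) (m t : ℕ) :
    SimpleGraph (V ⊕ (Fin (m + 1) ⊕ Fin t)) :=
  G.map (⟨Sum.inl, Sum.inl_injective⟩ : V ↪ V ⊕ (Fin (m + 1) ⊕ Fin t)) ⊔
    (starGraph m).map (⟨Sum.inr ∘ Sum.inl, Sum.inr_injective.comp Sum.inl_injective⟩ : Fin (m + 1) ↪ V ⊕ (Fin (m + 1) ⊕ Fin t)) ⊔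
    fromEdgeSet ({s(Sum.inl v, Sum.inr (Sum.inl 0))} ∪
      {e | ∃ i : Fin t, e = s(Sum.inl v, Sum.inr (Sum.inr i))})

/-- From `G` and a vertex `v`: add two new stars `K_{1,m}` and `K_{1,M}`, joining the
centre of each new star to `v` by an edge. -/
def addTwoStars (G : SimpleGraph V) (v : V) (m M : ℕ) :
    SimpleGraph (V ⊕ (Fin (m + 1) ⊕ Fin (M + 1))) :=
  G.map (⟨Sum.inl, Sum.inl_injective⟩ : V ↪ V ⊕ (Fin (m + 1) ⊕ Fin (M + 1))) ⊔
    (starGraph m).map (⟨Sum.inr ∘ Sum.inl, Sum.inr_injective.comp Sum.inl_injective⟩ : Fin (m + 1) ↪ V ⊕ (Fin (m + 1) ⊕ Fin (M + 1))) ⊔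
    (starGraph M).map (⟨Sum.inr ∘ Sum.inr, Sum.inr_injective.comp Sum.inr_injective⟩ : Fin (M + 1) ↪ V ⊕ (Fin (m + 1) ⊕ Fin (M + 1))) ⊔
    fromEdgeSet {s(Sum.inl v, Sum.inr (Sum.inl 0)), s(Sum.inl v, Sum.inr (Sum.inr 0))}

/-- The 1-sum of `G` and `H` at the vertex `u` of `G` and the vertex `w` of `H`:
the disjoint union of `G` and `H` with `u` and `w` identified. -/
def oneSum (G : SimpleGraph V) (H : SimpleGraph W) (u : V) (w : W) :
    SimpleGraph (V ⊕ {x : W // x ≠ w}) where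
  Adj x y :=
    match x, y with
    | Sum.inl a, Sum.inl b => G.Adj a b
    | Sum.inr a, Sum.inr b => H.Adj a.1 b.1
    | Sum.inl a, Sum.inr b => a = u ∧ H.Adj w b.1
    | Sum.inr a, Sum.inl b => b = u ∧ H.Adj w a.1
  symm := by
    refine ⟨?_⟩
    rintro (a | a) (b | b) h
    · exact h.symm
    · exact h
    · exact h
    · exact h.symm
  loopless := by
    refine ⟨?_⟩
    rintro (a | a) h
    · exact G.loopless.irrefl a h
    · exact H.loopless.irrefl a.1 h



section TreeLemmas

variable {G : SimpleGraph V}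

lemma dist_getVert_le (hc : G.Connected) {a b : V} (p : G.Walk a b) :
    ∀ i, G.dist a (p.getVert i) ≤ i := by
  induction p with
  | nil => intro i; simp [Walk.getVert, dist_self]
  | @cons a c b h q ih =>
    intro i
    cases i with
    | zero => simp [Walk.getVert_zero]
    | succ i =>
      rw [Walk.getVert_cons_succ]
      calc G.dist a (q.getVert i) ≤ G.dist a c + G.dist c (q.getVert i) := hc.dist_triangle
        _ ≤ 1 + i := by
            have h1 : G.dist a c ≤ 1 := by
              have := dist_le (Walk.cons h Walk.nil); simpa using this
            have h2 := ih i
            omega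
        _ = i + 1 := by omega

lemma dist_getVert_le' (hc : G.Connected) {a b : V} (p : G.Walk a b) :
    ∀ i, G.dist (p.getVert i) b ≤ p.length - i := by
  induction p with
  | nil => intro i; simp [Walk.getVert, dist_self]
  | @cons a c b h q ih =>
    intro i
    cases i with
    | zero =>
      rw [Walk.getVert_zero]
      have := dist_le (Walk.cons h q)
      simpa using this
    | succ i =>
      rw [Walk.getVert_cons_succ]
      have := ih i
      simp only [Walk.length_cons]
      omega

lemma dist_getVert (hc : G.Connected) {a b : V} (p : G.Walk a b)
    (hp : p.length = G.dist a b) {i : ℕ} (hi : i ≤ p.length) :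
    G.dist a (p.getVert i) = i ∧ G.dist a (p.getVert i) + G.dist (p.getVert i) b = G.dist a b := by
  have h1 := dist_getVert_le hc p i
  have h2 := dist_getVert_le' hc p i
  have h3 : G.dist a b ≤ G.dist a (p.getVert i) + G.dist (p.getVert i) b := hc.dist_triangle
  omega

/-- In a tree, adjacent vertices have different distances to any vertex. -/
lemma tree_dist_ne (hG : G.IsTree) {u v : V} (h : G.Adj u v) (z : V) :
    G.dist z u ≠ G.dist z v := by
  classical
  intro he
  have hc := hG.isConnected
  by_cases hz : G.dist z u = 0
  · have h1 : z = u := (hc z u).dist_eq_zero_iff.mp hz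
    have h2 : z = v := (hc z v).dist_eq_zero_iff.mp (he ▸ hz)
    exact h.ne (h1 ▸ h2)
  · obtain ⟨p, hp⟩ := (hc z u).exists_walk_length_eq_dist
    have hpath := p.isPath_of_length_eq_dist hp
    have hvs : v ∉ p.support := by
      intro hv
      have h1 : G.dist z v ≤ (p.takeUntil v hv).length := dist_le _
      have h2 : (p.takeUntil v hv).length + (p.dropUntil v hv).length = p.length := by
        rw [← Walk.length_append, Walk.take_spec]
      have h3 : G.dist v u ≤ (p.dropUntil v hv).length := dist_le _
      have h4 : G.dist v u = 1 := dist_eq_one_iff_adj.mpr h.symm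
      omega
    have hp' : (p.concat h).IsPath := by
      rw [← Walk.isPath_reverse_iff, Walk.reverse_concat]
      exact hpath.reverse.cons (by rwa [Walk.support_reverse, List.mem_reverse])
    obtain ⟨q, hq, hql⟩ := (hc z v).exists_path_of_dist
    have := (hG.existsUnique_path z v).unique hp' hq
    have hlen : (p.concat h).length = q.length := by rw [this]
    rw [Walk.length_concat, hql, hp] at hlen
    omega

/-- In a tree, at most one neighbour of `u` is closer to `z`. -/
lemma tree_unique_down (hG : G.IsTree) {u x v z : V} (hx : G.Adj u x) (hv : G.Adj u v)
    (hxv : x ≠ v) (h1 : G.dist z x + 1 = G.dist z u) (h2 : G.dist z v + 1 = G.dist z u) :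
    False := by
  classical
  have hc := hG.isConnected
  obtain ⟨p, hppath, hp⟩ := (hc z x).exists_path_of_dist
  obtain ⟨q, hqpath, hq⟩ := (hc z v).exists_path_of_dist
  have hus : ∀ {w : V} (r : G.Walk z w), r.length + 1 = G.dist z u → u ∉ r.support := by
    intro w r hr hu
    have ha : G.dist z u ≤ (r.takeUntil u hu).length := dist_le _
    have hb : (r.takeUntil u hu).length ≤ r.length := Walk.length_takeUntil_le _ _
    omega
  have hup : u ∉ p.support := hus p (by omega)
  have huq : u ∉ q.support := hus q (by omega)
  have hp' : (p.concat hx.symm).IsPath := by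
    rw [← Walk.isPath_reverse_iff, Walk.reverse_concat]
    exact hppath.reverse.cons (by rwa [Walk.support_reverse, List.mem_reverse])
  have hq' : (q.concat hv.symm).IsPath := by
    rw [← Walk.isPath_reverse_iff, Walk.reverse_concat]
    exact hqpath.reverse.cons (by rwa [Walk.support_reverse, List.mem_reverse])
  have heq := (hG.existsUnique_path z u).unique hp' hq'
  have heq' : (p.concat hx.symm).reverse = (q.concat hv.symm).reverse := by rw [heq]
  rw [Walk.reverse_concat, Walk.reverse_concat] at heq'
  have hsup := congrArg Walk.support heq'
  rw [Walk.support_cons, Walk.support_cons, Walk.support_eq_cons p.reverse,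
    Walk.support_eq_cons q.reverse] at hsup
  simp only [List.cons.injEq] at hsup
  exact hxv hsup.2.1

lemma exists_parent (hG : G.IsTree) {u y : V} (hne : u ≠ y) :
    ∃ pr, G.Adj u pr ∧ G.dist pr y + 1 = G.dist u y := by
  have hc := hG.isConnected
  have hd : G.dist u y ≠ 0 := fun h => hne ((hc u y).dist_eq_zero_iff.mp h)
  obtain ⟨p, hp⟩ := (hc u y).exists_walk_length_eq_dist
  have hlen : 1 ≤ p.length := by omega
  refine ⟨p.getVert 1, ?_, ?_⟩
  · have := p.adj_getVert_succ (show 0 < p.length by omega)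
    simpa [Walk.getVert_zero] using this
  · have hs := dist_getVert hc p hp hlen
    omega

lemma neighbor_up (hG : G.IsTree) {u y pr x : V} (hpra : G.Adj u pr)
    (hprd : G.dist pr y + 1 = G.dist u y) (hx : G.Adj u x) (hne : x ≠ pr) :
    G.dist x y = G.dist u y + 1 := by
  have hc := hG.isConnected
  have hne1' : G.dist y u ≠ G.dist y x := tree_dist_ne hG hx y
  have d1 : G.dist y u = G.dist u y := dist_comm
  have d2 : G.dist y x = G.dist x y := dist_comm
  have hne1 : G.dist u y ≠ G.dist x y := by omega
  have hxu : G.dist x u = 1 := dist_eq_one_iff_adj.mpr hx.symm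
  have hux : G.dist u x = 1 := dist_eq_one_iff_adj.mpr hx
  have t1 : G.dist x y ≤ G.dist x u + G.dist u y := hc.dist_triangle
  have t2 : G.dist u y ≤ G.dist u x + G.dist x y := hc.dist_triangle
  by_cases hdown : G.dist x y + 1 = G.dist u y
  · exfalso
    have c1 : G.dist y x = G.dist x y := dist_comm
    have c2 : G.dist y pr = G.dist pr y := dist_comm
    have c3 : G.dist y u = G.dist u y := dist_comm
    exact tree_unique_down hG hx hpra hne (z := y) (by omega) (by omega)
  · omega


lemma kleaf_branch [Fintype V] (hG : G.IsTree) (y : V) :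
    ∀ d : ℕ, ∀ u : V, u ≠ y →
      (∀ z, G.dist z y = G.dist z u + G.dist u y → G.dist u z ≤ d) →
      (∃ z, G.dist z y = G.dist z u + G.dist u y ∧ G.dist u z = d) →
      IsKLeaf G d u := by
  classical
  have hc := hG.isConnected
  intro d
  induction d using Nat.strong_induction_on with
  | _ d ih =>
  intro u huy hbound hex
  obtain ⟨pr, hpra, hprd⟩ := exists_parent hG huy
  have hup : ∀ x, G.Adj u x → x ≠ pr → G.dist x y = G.dist u y + 1 :=
    fun x hx hne => neighbor_up hG hpra hprd hx hne
  have hsub : ∀ x, G.Adj u x → x ≠ pr → ∀ z, G.dist z y = G.dist z x + G.dist x y →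
      G.dist z y = G.dist z u + G.dist u y ∧ G.dist z u = G.dist z x + 1 := by
    intro x hx hne z hz
    have h1 := hup x hx hne
    have hxu : G.dist x u = 1 := dist_eq_one_iff_adj.mpr hx.symm
    have h2 : G.dist z u ≤ G.dist z x + G.dist x u := hc.dist_triangle
    have h3 : G.dist z y ≤ G.dist z u + G.dist u y := hc.dist_triangle
    omega
  have hney : ∀ x, G.Adj u x → x ≠ pr → x ≠ y := by
    intro x hx hne h
    have h1 := hup x hx hne
    rw [h, SimpleGraph.dist_self] at h1
    omega
  cases d with
  | zero =>
    rw [IsKLeaf]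
    refine ⟨pr, hpra, ?_⟩
    intro x hx
    by_contra hne
    have hself : G.dist x y = G.dist x x + G.dist x y := by
      rw [SimpleGraph.dist_self, Nat.zero_add]
    have hb := hbound x (hsub x hx hne x hself).1
    have : G.dist u x = 1 := dist_eq_one_iff_adj.mpr hx
    omega
  | succ d =>
    rw [IsKLeaf]
    constructor
    · obtain ⟨z0, hz0b, hz0d⟩ := hex
      have hd0 : G.dist u z0 ≠ 0 := by omega
      obtain ⟨p, hp⟩ := (hc u z0).exists_walk_length_eq_dist
      have hlp : 1 ≤ p.length := by omega
      set x := p.getVert 1 with hxdef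
      have hadj : G.Adj u x := by
        have := p.adj_getVert_succ (show 0 < p.length by omega)
        simpa [Walk.getVert_zero] using this
      have hsplit := dist_getVert hc p hp hlp
      rw [← hxdef] at hsplit
      have hxz0 : G.dist x z0 = d := by omega
      have c1 : G.dist z0 x = G.dist x z0 := dist_comm
      have c2 : G.dist z0 u = G.dist u z0 := dist_comm
      have hxpr : x ≠ pr := by
        intro h
        have t1 : G.dist z0 y ≤ G.dist z0 x + G.dist x y := hc.dist_triangle
        have hxy' : G.dist x y + 1 = G.dist u y := by rw [h]; exact hprd
        omega
      have hxy := hup x hadj hxpr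
      have hz0x : G.dist z0 y = G.dist z0 x + G.dist x y := by omega
      refine ⟨x, hadj, ih d (by omega) x (hney x hadj hxpr) ?_ ⟨z0, hz0x, hxz0⟩⟩
      intro z hz
      have h4 := (hsub x hadj hxpr z hz).2
      have h5 := hbound z (hsub x hadj hxpr z hz).1
      have c3 : G.dist u z = G.dist z u := dist_comm
      have c4 : G.dist x z = G.dist z x := dist_comm
      omega
    · refine ⟨pr, ?_⟩
      intro x hx hne
      have hxy := hup x hx hne
      set s := Finset.univ.filter (fun z => G.dist z y = G.dist z x + G.dist x y) with hs
      have hxs : x ∈ s := by simp [hs, SimpleGraph.dist_self]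
      obtain ⟨zm, hzm, hmax⟩ := Finset.exists_max_image s (fun z => G.dist x z) ⟨x, hxs⟩
      rw [hs, Finset.mem_filter] at hzm
      have hbm := (hsub x hx hne zm hzm.2)
      have h5 := hbound zm hbm.1
      have c3 : G.dist u zm = G.dist zm u := dist_comm
      have c4 : G.dist x zm = G.dist zm x := dist_comm
      have ht : G.dist x zm ≤ d := by omega
      refine ⟨G.dist x zm, ⟨ht, ih (G.dist x zm) (by omega) x (hney x hx hne) ?_
        ⟨zm, hzm.2, rfl⟩⟩⟩
      intro z hz
      exact hmax z (by simp [hs, hz])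

end TreeLemmas

/-- If a finite tree has diameter at least `2k` (`k ≥ 1`), then it contains
a `k`-leaf. -/
theorem exists_kLeaf_of_big_diam {V : Type u} [Fintype V] (G : SimpleGraph V)
    (hG : G.IsTree) (k : ℕ) (hk : 0 < k) (hdiam : ((2 * k : ℕ) : ℕ∞) ≤ G.ediam) :
    ∃ v : V, IsKLeaf G k v := by
  classical
  have hc := hG.isConnected
  have : Nonempty V := hc.nonempty
  obtain ⟨x0, y0, hxy⟩ := exists_edist_eq_ediam_of_finite (G := G)
  obtain ⟨p0, hp0⟩ := (hc x0 y0).exists_walk_length_eq_dist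
  have h2k : 2 * k ≤ G.dist x0 y0 := by
    have h1 : (2 * k : ℕ∞) ≤ G.edist x0 y0 := hxy ▸ hdiam
    have h2 : G.edist x0 y0 ≤ (p0.length : ℕ∞) := edist_le p0
    have h3 : (2 * k : ℕ∞) ≤ (G.dist x0 y0 : ℕ∞) := by
      rw [← hp0]; exact le_trans h1 h2
    exact_mod_cast h3
  set y := y0 with hy
  obtain ⟨x, -, hxmax⟩ := Finset.exists_max_image Finset.univ
    (fun z => G.dist z y) ⟨x0, Finset.mem_univ x0⟩
  have hDmax : ∀ z, G.dist z y ≤ G.dist x y := fun z => hxmax z (Finset.mem_univ z)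
  have hD2k : 2 * k ≤ G.dist x y := le_trans h2k (hxmax x0 (Finset.mem_univ x0))
  obtain ⟨p, hp⟩ := (hc x y).exists_walk_length_eq_dist
  have hkl : k ≤ p.length := by omega
  set u := p.getVert k with hu
  have hsplit := dist_getVert hc p hp hkl
  rw [← hu] at hsplit
  have huy : u ≠ y := by
    intro h
    rw [h, SimpleGraph.dist_self] at hsplit
    omega
  refine ⟨u, kleaf_branch hG y k u huy ?_ ⟨x, ?_, ?_⟩⟩
  · intro z hz
    have h1 := hDmax z
    have c1 : G.dist u z = G.dist z u := dist_comm
    have c2 : G.dist x u = G.dist u x := dist_comm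
    omega
  · have c2 : G.dist x u = G.dist u x := dist_comm
    omega
  · have c2 : G.dist u x = G.dist x u := dist_comm
    omega

end EternalDom
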